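/- In the fluid model under the utility-maximizing allocation, the cost ψ(N̅(t)) = ∑_r C_r(N̅_r(t)) is non-increasing: at every regular (differentiable) time t, dψ(N̅(t))/dt ≤ ∑_r [U_r(N̅_r(t), ρ_r) − U_r(N̅_r(t), Λ_r(N̅(t)))] ≤ 0. -/

import Mathlib

open Finset

section Aux
open Filter Set Topology


lemma concave_grad_ineq {f : ℝ → ℝ} {d ρ y : ℝ} (hρ : 0 ≤ ρ) (hy : 0 ≤ y)
    (hconc : ConcaveOn ℝ (Set.Ici 0) f)
    (hd : HasDerivWithinAt f d (Set.Ici ρ) ρ) :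
    f y ≤ f ρ + d * (y - ρ) := by
  rw [hasDerivWithinAt_iff_tendsto_slope, Set.Ici_sdiff_left] at hd
  have hanti : ∀ x z : ℝ, 0 ≤ x → 0 ≤ z → x ≠ ρ → z ≠ ρ → x ≤ z →
      slope f ρ z ≤ slope f ρ x := by
    intro x z hx hz hxρ hzρ hxz
    have := hconc.neg.secant_mono hρ hx hz hxρ hzρ hxz
    simp only [slope_def_field] at this ⊢
    simp only [Pi.neg_apply] at this
    have e1 : (-f x - -f ρ)/(x - ρ) = -((f x - f ρ)/(x - ρ)) := by ring
    have e2 : (-f z - -f ρ)/(z - ρ) = -((f z - f ρ)/(z - ρ)) := by ring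
    rw [e1, e2] at this
    linarith
  rcases lt_trichotomy y ρ with hlt | heq | hgt
  · -- y < ρ : d ≤ slope f ρ y
    have hev : ∀ᶠ z in 𝓝[>] ρ, slope f ρ z ≤ slope f ρ y := by
      filter_upwards [self_mem_nhdsWithin] with z hz
      exact hanti y z hy (le_trans hρ (le_of_lt hz)) (ne_of_lt hlt) (ne_of_gt hz) (le_of_lt (lt_trans hlt hz))
    have hle : d ≤ slope f ρ y := le_of_tendsto hd hev
    rw [slope_def_field] at hle
    have hyρ : y - ρ < 0 := by linarith
    have := (le_div_iff_of_neg hyρ).mp hle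
    linarith
  · simp [heq]
  · -- ρ < y : slope f ρ y ≤ d
    have hev : ∀ᶠ z in 𝓝[>] ρ, slope f ρ y ≤ slope f ρ z := by
      filter_upwards [Ioo_mem_nhdsGT_of_mem (left_mem_Ico.mpr hgt)] with z hz
      exact hanti z y (le_trans hρ hz.1.le) hy (ne_of_gt hz.1) (ne_of_gt hgt) hz.2.le
    have hle : slope f ρ y ≤ d := ge_of_tendsto hd hev
    rw [slope_def_field] at hle
    have hyρ : 0 < y - ρ := by linarith
    have := (div_le_iff₀ hyρ).mp hle
    linarith

end Aux

/-- Under the utility-maximizing allocation, the fluid cost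
`ψ(N̅(t)) = ∑ r, C r (N̅ r (t))` is non-increasing: at a regular time `t`,
`dψ/dt = ∑ r (ρ r − Λ̅ r) ∂₂U r (N̅_r(t), ρ r)`
`  ≤ ∑ r [U r (N̅_r(t)) (ρ r) − U r (N̅_r(t)) (Λopt r)] ≤ 0`. -/
theorem fluid_cost_nonincreasing
    {L R : Type*} [Fintype L] [Fintype R] [DecidableEq L]
    (route : R → Finset L) (c : L → ℝ)
    (lam ν ρ : R → ℝ) (hν : ∀ r, 0 < ν r) (hρ : ∀ r, ρ r = lam r * ν r)
    -- utilities, derivative in the allocation argument, and costs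
    (U : R → ℝ → ℝ → ℝ) (dU : R → ℝ → ℝ → ℝ) (C : R → ℝ → ℝ)
    (hU0 : ∀ r Λ, U r 0 Λ = 0)
    (hconc : ∀ r x, ConcaveOn ℝ (Set.Ici 0) (U r x))
    (hderiv : ∀ r x Λ, 0 ≤ Λ → HasDerivWithinAt (U r x) (dU r x Λ) (Set.Ici Λ) Λ)
    (hCderiv : ∀ r x, HasDerivAt (C r) (ν r * dU r x (ρ r)) x)
    -- feasible allocation set M, containing ρ
    (M : Set (R → ℝ))
    (hM : M = {Λ | (∀ r, 0 ≤ Λ r) ∧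
      ∀ ℓ, ∑ r ∈ Finset.univ.filter (fun r => ℓ ∈ route r), Λ r ≤ c ℓ})
    (hρM : ρ ∈ M)
    -- the fluid state at a regular time t, with utility-maximizing allocation
    (Nbar : ℝ → (R → ℝ)) (t : ℝ) (hNpos : ∀ r, 0 ≤ Nbar t r)
    (Λopt : R → ℝ) (hΛoptM : Λopt ∈ M)
    (hΛopt : ∀ Λ ∈ M, ∑ r, U r (Nbar t r) (Λ r) ≤ ∑ r, U r (Nbar t r) (Λopt r))
    -- the modified allocation Λ̅ and the fluid dynamics at time t
    (Λb : R → ℝ)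
    (hΛb : ∀ r, (0 < Nbar t r → Λb r = Λopt r) ∧ (Nbar t r = 0 → Λb r = ρ r))
    (hdyn : ∀ r, HasDerivAt (fun s => Nbar s r) (lam r - (ν r)⁻¹ * Λb r) t) :
    HasDerivAt (fun s => ∑ r, C r (Nbar s r))
        (∑ r, (ρ r - Λb r) * dU r (Nbar t r) (ρ r)) t ∧
    (∑ r, (ρ r - Λb r) * dU r (Nbar t r) (ρ r) ≤
      ∑ r, (U r (Nbar t r) (ρ r) - U r (Nbar t r) (Λopt r))) ∧
    (∑ r, (U r (Nbar t r) (ρ r) - U r (Nbar t r) (Λopt r)) ≤ 0) := by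
  -- basic facts from membership in M
  rw [hM] at hρM hΛoptM
  have hρpos : ∀ r, 0 ≤ ρ r := hρM.1
  have hΛpos : ∀ r, 0 ≤ Λopt r := hΛoptM.1
  constructor
  · -- chain rule
    apply HasDerivAt.fun_sum
    intro r _
    have h1 := (hCderiv r (Nbar t r)).comp t (hdyn r)
    convert h1 using 1
    · rfl
    · rfl
    have hν0 : (ν r : ℝ) ≠ 0 := ne_of_gt (hν r)
    rw [hρ r]
    field_simp
  refine ⟨Finset.sum_le_sum fun r _ => ?_, ?_⟩
  · rcases (hNpos r).eq_or_lt with h0 | hpos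
    · rw [(hΛb r).2 h0.symm, ← h0, hU0, hU0]
      simp
    · rw [(hΛb r).1 hpos]
      have := concave_grad_ineq (hρpos r) (hΛpos r) (hconc r (Nbar t r))
        (hderiv r (Nbar t r) (ρ r) (hρpos r))
      nlinarith [this]
  · have h := hΛopt ρ (by rw [hM]; exact ⟨hρM.1, hρM.2⟩)
    rw [Finset.sum_sub_distrib]
    linarith
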